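/- arXiv:1809.08813 — 3 statements merged into one kernel-verified Lean document; each statement's English description precedes it below -/
import Mathlib

section
/- Let A be a positive normalized linear functional on L, let f ∈ C^n([a,b]) with n ≥ 2, and let g ∈ L with f∘g ∈ L. Then LR(f,g,a,b,A) = Σ_{k=2}^{n-1} f[a; b,…,b (k times)] · A[(g−a1)(g−b1)^{k−1}] + A(R_1(g)), where R_1(t) = (t−a)(t−b)^{n−1} · f[t; a; b,…,b ((n−1) times)]. -/
/-- Divided difference of `f` at a (sorted) list of points, with repeated points
handled via derivatives (taken within the set `s`). -/
noncomputable def divDiff (s : Set ℝ) (f : ℝ → ℝ) : List ℝ → ℝ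
  | [] => 0
  | [x] => f x
  | x :: y :: l =>
    if x = (y :: l).getLast (List.cons_ne_nil y l) then
      iteratedDerivWithin (l.length + 1) f s x / Nat.factorial (l.length + 1)
    else
      (divDiff s f (y :: l) - divDiff s f (x :: (y :: l).dropLast)) /
        ((y :: l).getLast (List.cons_ne_nil y l) - x)
termination_by l => l.length
decreasing_by
  all_goals simp [List.length_dropLast]

theorem DD.getLast_eq_of_eq {α : Type*} {l l' : List α} (h : l = l') (h1 : l ≠ []) :
    l.getLast h1 = l'.getLast (h ▸ h1) := by subst h; rfl

theorem DD.e1 (b : ℝ) (k : ℕ) : b :: List.replicate k b = List.replicate k b ++ [b] := by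
  rw [← List.replicate_succ, List.replicate_succ']

theorem DD.e2 (x b : ℝ) (k : ℕ) :
    x :: b :: List.replicate k b = (x :: List.replicate k b) ++ [b] := by
  rw [DD.e1, List.cons_append]

theorem DD.gl1 (b : ℝ) (k : ℕ) (h : b :: List.replicate k b ≠ []) :
    (b :: List.replicate k b).getLast h = b := by
  rw [DD.getLast_eq_of_eq (DD.e1 b k), List.getLast_concat]

theorem DD.gl2 (x b : ℝ) (k : ℕ) (h : x :: b :: List.replicate k b ≠ []) :
    (x :: b :: List.replicate k b).getLast h = b := by
  rw [DD.getLast_eq_of_eq (DD.e2 x b k), List.getLast_concat]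

theorem DD.dl1 (b : ℝ) (k : ℕ) :
    (b :: List.replicate k b).dropLast = List.replicate k b := by
  rw [DD.e1, List.dropLast_concat]

theorem DD.dl2 (x b : ℝ) (k : ℕ) :
    (x :: b :: List.replicate k b).dropLast = x :: List.replicate k b := by
  rw [DD.e2, List.dropLast_concat]

theorem DD.single (s : Set ℝ) (f : ℝ → ℝ) (x : ℝ) : divDiff s f [x] = f x := by
  rw [divDiff]

theorem DD.Q_unfold (s : Set ℝ) (f : ℝ → ℝ) {x b : ℝ} (hxb : x ≠ b) (k : ℕ) :
    divDiff s f (x :: b :: List.replicate k b) =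
      (divDiff s f (b :: List.replicate k b) - divDiff s f (x :: List.replicate k b)) /
        (b - x) := by
  rw [divDiff]
  simp only [DD.gl1, DD.dl1]
  rw [if_neg hxb]

theorem DD.R_unfold (s : Set ℝ) (f : ℝ → ℝ) {a b : ℝ} (hab : a ≠ b) (x : ℝ) (k : ℕ) :
    divDiff s f (a :: x :: b :: List.replicate k b) =
      (divDiff s f (x :: b :: List.replicate k b) -
        divDiff s f (a :: x :: List.replicate k b)) / (b - a) := by
  rw [divDiff]
  simp only [DD.gl2, DD.dl2]
  rw [if_neg hab]

theorem DD.base_pair (s : Set ℝ) (f : ℝ → ℝ) (a x : ℝ) :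
    (x - a) * divDiff s f [a, x] = f x - f a := by
  rcases eq_or_ne x a with rfl | h
  · simp
  · rw [divDiff]
    have hgl : ([x] : List ℝ).getLast (List.cons_ne_nil x []) = x := rfl
    rw [if_neg (by rw [hgl]; exact h.symm)]
    simp only [hgl, List.dropLast_singleton]
    rw [DD.single, DD.single]
    field_simp [sub_ne_zero.2 h]

theorem DD.Qid (s : Set ℝ) (f : ℝ → ℝ) (x b : ℝ) (k : ℕ) :
    divDiff s f (x :: List.replicate k b) =
      divDiff s f (b :: List.replicate k b) +
        (x - b) * divDiff s f (x :: b :: List.replicate k b) := by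
  rcases eq_or_ne x b with rfl | h
  · ring
  · rw [DD.Q_unfold s f h]
    have hbx : b - x ≠ 0 := sub_ne_zero.2 (Ne.symm h)
    field_simp
    ring

theorem DD.key (s : Set ℝ) (f : ℝ → ℝ) {a b : ℝ} (hab : a ≠ b) (x : ℝ) : ∀ m : ℕ,
    divDiff s f (a :: x :: List.replicate m b) =
      divDiff s f (a :: b :: List.replicate m b) +
        (x - b) * divDiff s f (a :: x :: b :: List.replicate m b) := by
  have hba : b - a ≠ 0 := sub_ne_zero.2 (Ne.symm hab)
  intro m
  induction m with
  | zero =>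
    have h1 := DD.R_unfold s f hab x 0
    have hQ := DD.Qid s f x b 0
    have hD := DD.Q_unfold s f hab 0
    have hbase := DD.base_pair s f a x
    simp only [List.replicate_zero] at h1 hQ hD ⊢
    rw [DD.single, DD.single] at hQ
    rw [DD.single, DD.single] at hD
    rw [h1, hD]
    field_simp
    linear_combination hbase + hQ
  | succ m ih =>
    simp only [List.replicate_succ]
    have h1 := DD.R_unfold s f hab x m
    have h2 := DD.R_unfold s f hab x (m + 1)
    have h3 := DD.Q_unfold s f hab (m + 1)
    have h4 := DD.Qid s f x b (m + 1)
    simp only [List.replicate_succ] at h2 h3 h4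
    rw [h1, h2, h3]
    linear_combination (h4 - ih) / (b - a)

theorem DD.pointwise (s : Set ℝ) (f : ℝ → ℝ) {a b : ℝ} (hab : a ≠ b) (x : ℝ) (j : ℕ) :
    f x = (b - x) / (b - a) * f a + (x - a) / (b - a) * f b +
      (∑ k ∈ Finset.Icc 2 (j + 1),
        divDiff s f (a :: List.replicate k b) * ((x - a) * (x - b) ^ (k - 1))) +
      (x - a) * (x - b) ^ (j + 1) * divDiff s f (a :: x :: List.replicate (j + 1) b) := by
  have hba : b - a ≠ 0 := sub_ne_zero.2 (Ne.symm hab)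
  induction j with
  | zero =>
    rw [show Finset.Icc 2 1 = ∅ from Finset.Icc_eq_empty (by omega)]
    simp only [Finset.sum_empty, List.replicate_succ, List.replicate_zero, pow_one]
    have hkey := DD.key s f hab x 0
    simp only [List.replicate_zero] at hkey
    have hbase := DD.base_pair s f a x
    have hD := DD.Q_unfold s f hab 0
    simp only [List.replicate_zero] at hD
    rw [DD.single, DD.single] at hD
    have hinv : (b - a) * (b - a)⁻¹ = 1 := mul_inv_cancel₀ hba
    linear_combination -hbase + (x - a) * hkey + (x - a) * hD - f a * hinv
  | succ j ih =>
    rw [Finset.sum_Icc_succ_top (by omega : 2 ≤ j + 1 + 1)]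
    have e : List.replicate (j + 1 + 1) b = b :: List.replicate (j + 1) b :=
      List.replicate_succ ..
    rw [e]
    simp only [Nat.add_sub_cancel]
    have hkey := DD.key s f hab x (j + 1)
    linear_combination ih + (x - a) * (x - b) ^ (j + 1) * hkey

/-- Identity (2.3) of Lemma 2.1: the `(1, n-1)` Hermite expansion of the
Edmundson–Lah–Ribarič difference `LR(f,g,a,b,A)`. -/
theorem lemma21_m_eq_one {E : Type*} [Nonempty E]
    (a b : ℝ) (hab : a < b) (n : ℕ) (hn : 2 ≤ n)
    (f : ℝ → ℝ) (hf : ContDiffOn ℝ n f (Set.Icc a b))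
    (A : (E → ℝ) →ₗ[ℝ] ℝ)
    (hApos : ∀ h : E → ℝ, (∀ t, 0 ≤ h t) → 0 ≤ A h)
    (hA1 : A (fun _ => (1 : ℝ)) = 1)
    (g : E → ℝ) (hg : ∀ t, g t ∈ Set.Icc a b) :
    A (fun t => f (g t)) - (b - A g) / (b - a) * f a - (A g - a) / (b - a) * f b =
      (∑ k ∈ Finset.Icc 2 (n - 1),
        divDiff (Set.Icc a b) f (a :: List.replicate k b) *
          A (fun t => (g t - a) * (g t - b) ^ (k - 1))) +
      A (fun t => (g t - a) * (g t - b) ^ (n - 1) *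
          divDiff (Set.Icc a b) f (a :: g t :: List.replicate (n - 1) b)) := by
  have hab' : a ≠ b := ne_of_lt hab
  have hba : b - a ≠ 0 := sub_ne_zero.2 (Ne.symm hab')
  obtain ⟨j, rfl⟩ : ∃ j, n = j + 2 := ⟨n - 2, by omega⟩
  have hsub : j + 2 - 1 = j + 1 := rfl
  simp only [hsub]
  set S := Set.Icc a b with hS
  set c0 : ℝ := (b * f a - a * f b) / (b - a) with hc0
  set c1 : ℝ := (f b - f a) / (b - a) with hc1
  have hfun : (fun t => f (g t)) =
      (c0 • (fun _ : E => (1 : ℝ)) + c1 • g +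
        (∑ k ∈ Finset.Icc 2 (j + 1),
          divDiff S f (a :: List.replicate k b) •
            (fun t : E => (g t - a) * (g t - b) ^ (k - 1))) +
        fun t : E => (g t - a) * (g t - b) ^ (j + 1) *
          divDiff S f (a :: g t :: List.replicate (j + 1) b)) := by
    funext t
    have hp := DD.pointwise S f hab' (g t) j
    simp only [Pi.add_apply, Pi.smul_apply, Finset.sum_apply, smul_eq_mul, hc0, hc1]
    rw [hp]
    field_simp
    ring
  rw [hfun]
  rw [map_add, map_add, map_add, map_smul, map_smul, map_sum, hA1]
  simp only [map_smul, smul_eq_mul, hc0, hc1]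
  field_simp
  ring
end

section
/- Let A be a positive normalized linear functional on L, let f ∈ C^n([a,b]) with n ≥ 3, and let g ∈ L with f∘g ∈ L. Then LR(f,g,a,b,A) = f[a,a;b] · A[(g−a1)(g−b1)] + Σ_{k=2}^{n-2} f[a,a; b,…,b (k times)] · A[(g−a1)^2 (g−b1)^{k−1}] + A(R_2(g)), where R_2(t) = (t−a)^2 (t−b)^{n−2} · f[t; a,a; b,…,b ((n−2) times)]. -/
namespace DDaux

lemma divDiff_singleton (s : Set ℝ) (f : ℝ → ℝ) (u : ℝ) : divDiff s f [u] = f u := by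
  rw [divDiff]

lemma divDiff_cons (s : Set ℝ) (f : ℝ → ℝ) (u v : ℝ) (l : List ℝ)
    (h : u ≠ (v :: l).getLast (List.cons_ne_nil v l)) :
    divDiff s f (u :: v :: l) =
      (divDiff s f (v :: l) - divDiff s f (u :: (v :: l).dropLast)) /
        ((v :: l).getLast (List.cons_ne_nil v l) - u) := by
  rw [divDiff]; simp [h]

lemma divDiff_step (s : Set ℝ) (f : ℝ → ℝ) (u v c : ℝ) (l : List ℝ)
    (hlast : (v :: l).getLast (List.cons_ne_nil v l) = c) (hu : u ≠ c) :
    divDiff s f (u :: v :: l) * (c - u) =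
      divDiff s f (v :: l) - divDiff s f (u :: (v :: l).dropLast) := by
  rw [divDiff_cons s f u v l (by rw [hlast]; exact hu), hlast,
    div_mul_cancel₀ _ (sub_ne_zero.mpr (Ne.symm hu))]

lemma gl0 (b : ℝ) : ∀ j : ℕ, (b :: List.replicate j b).getLast (List.cons_ne_nil _ _) = b
  | 0 => rfl
  | (j+1) => by
      rw [List.getLast_cons (by simp)]
      exact gl0 b j

lemma gl1 (b v : ℝ) (j : ℕ) :
    (v :: b :: List.replicate j b).getLast (List.cons_ne_nil _ _) = b := by
  rw [List.getLast_cons (by simp)]; exact gl0 b j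

lemma gl2 (b u v : ℝ) (j : ℕ) :
    (u :: v :: b :: List.replicate j b).getLast (List.cons_ne_nil _ _) = b := by
  rw [List.getLast_cons (by simp)]; exact gl1 b v j

lemma dl0 (b : ℝ) (j : ℕ) : (b :: List.replicate j b).dropLast = List.replicate j b := by
  have : b :: List.replicate j b = List.replicate (j+1) b := List.replicate_succ.symm
  rw [this]; simp

lemma dl1 (b v : ℝ) (j : ℕ) :
    (v :: b :: List.replicate j b).dropLast = v :: List.replicate j b := by
  rw [List.dropLast_cons_of_ne_nil (by simp), dl0]

lemma dl2 (b u v : ℝ) (j : ℕ) :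
    (u :: v :: b :: List.replicate j b).dropLast = u :: v :: List.replicate j b := by
  rw [List.dropLast_cons_of_ne_nil (by simp), dl1]

variable (s : Set ℝ) (f : ℝ → ℝ) (a b x : ℝ)

lemma L0 (j : ℕ) :
    divDiff s f (x :: b :: List.replicate j b) * (x - b) =
      divDiff s f (x :: List.replicate j b) - divDiff s f (b :: List.replicate j b) := by
  by_cases hxb : x = b
  · subst hxb; simp
  · have h := divDiff_step s f x b b (List.replicate j b) (gl0 b j) hxb
    rw [dl0] at h
    linear_combination -h

lemma N1 (hab : a ≠ b) : ∀ j : ℕ,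
    divDiff s f (a :: x :: List.replicate j b) * (x - a) =
      divDiff s f (x :: List.replicate j b) - divDiff s f (a :: List.replicate j b)
  | 0 => by
      by_cases hxa : x = a
      · subst hxa; simp
      · have h := divDiff_step s f a x x [] rfl (fun h => hxa h.symm)
        simpa [divDiff_singleton] using h
  | (j+1) => by
      have hba : b - a ≠ 0 := sub_ne_zero.mpr (Ne.symm hab)
      simp only [List.replicate_succ]
      have A1 := divDiff_step s f a x b (b :: List.replicate j b) (gl1 b x j) hab
      rw [dl1] at A1
      have A2 := divDiff_step s f a b b (List.replicate j b) (gl0 b j) hab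
      rw [dl0] at A2
      have ih := N1 hab j
      have hL0 := L0 s f b x j
      apply mul_right_cancel₀ hba
      linear_combination (x - a) * A1 + A2 - ih + hL0

lemma L1 (hab : a ≠ b) (j : ℕ) :
    divDiff s f (a :: x :: b :: List.replicate j b) * (x - b) =
      divDiff s f (a :: x :: List.replicate j b) - divDiff s f (a :: b :: List.replicate j b) := by
  have hba : b - a ≠ 0 := sub_ne_zero.mpr (Ne.symm hab)
  have A1 := divDiff_step s f a x b (b :: List.replicate j b) (gl1 b x j) hab
  rw [dl1] at A1
  have A2 := divDiff_step s f a b b (List.replicate j b) (gl0 b j) hab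
  rw [dl0] at A2
  have hL0 := L0 s f b x j
  have hN1 := N1 s f a b x hab j
  apply mul_right_cancel₀ hba
  linear_combination (x - b) * A1 + A2 + hL0 - hN1

lemma N2 (hab : a ≠ b) : ∀ j : ℕ,
    divDiff s f (a :: a :: x :: List.replicate j b) * (x - a) =
      divDiff s f (a :: x :: List.replicate j b) - divDiff s f (a :: a :: List.replicate j b)
  | 0 => by
      by_cases hxa : x = a
      · subst hxa; simp
      · have h := divDiff_step s f a a x [x] (by simp) (fun h => hxa h.symm)
        simpa using h
  | (j+1) => by
      have hba : b - a ≠ 0 := sub_ne_zero.mpr (Ne.symm hab)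
      simp only [List.replicate_succ]
      have A1 := divDiff_step s f a a b (x :: b :: List.replicate j b) (gl2 b a x j) hab
      rw [dl2] at A1
      have A2 := divDiff_step s f a a b (b :: List.replicate j b) (gl1 b a j) hab
      rw [dl1] at A2
      have ih := N2 hab j
      have hL1 := L1 s f a b x hab j
      apply mul_right_cancel₀ hba
      linear_combination (x - a) * A1 + A2 - ih + hL1

lemma L2 (hab : a ≠ b) (j : ℕ) :
    divDiff s f (a :: a :: x :: b :: List.replicate j b) * (x - b) =
      divDiff s f (a :: a :: x :: List.replicate j b) -
        divDiff s f (a :: a :: b :: List.replicate j b) := by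
  have hba : b - a ≠ 0 := sub_ne_zero.mpr (Ne.symm hab)
  have A1 := divDiff_step s f a a b (x :: b :: List.replicate j b) (gl2 b a x j) hab
  rw [dl2] at A1
  have A2 := divDiff_step s f a a b (b :: List.replicate j b) (gl1 b a j) hab
  rw [dl1] at A2
  have hL1 := L1 s f a b x hab j
  have hN2 := N2 s f a b x hab j
  apply mul_right_cancel₀ hba
  linear_combination (x - b) * A1 + A2 + hL1 - hN2

lemma telescope (hab : a ≠ b) : ∀ m : ℕ,
    divDiff s f [a, a, x] =
      (∑ j ∈ Finset.Icc 1 m, divDiff s f (a :: a :: List.replicate j b) * (x - b) ^ (j - 1)) +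
        divDiff s f (a :: a :: x :: List.replicate m b) * (x - b) ^ m
  | 0 => by simp
  | (m+1) => by
      rw [Finset.sum_Icc_succ_top (by omega : 1 ≤ m + 1)]
      simp only [Nat.add_sub_cancel, List.replicate_succ]
      have ih := telescope hab m
      have hL2 := L2 s f a b x hab m
      linear_combination ih - (x - b) ^ m * hL2

lemma pointwise (hab : a < b) (m : ℕ) (hm : 1 ≤ m) (x : ℝ) :
    f x = (b - x) / (b - a) * f a + (x - a) / (b - a) * f b +
      divDiff s f [a, a, b] * ((x - a) * (x - b)) +
      (∑ k ∈ Finset.Icc 2 m,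
        divDiff s f (a :: a :: List.replicate k b) * ((x - a) ^ 2 * (x - b) ^ (k - 1))) +
      (x - a) ^ 2 * (x - b) ^ m * divDiff s f (a :: a :: x :: List.replicate m b) := by
  have hab' : a ≠ b := hab.ne
  have hba : b - a ≠ 0 := sub_ne_zero.mpr hab.ne'
  have h1 := N1 s f a b x hab' 0
  simp only [List.replicate_zero, divDiff_singleton] at h1
  have h2 := N2 s f a b x hab' 0
  simp only [List.replicate_zero] at h2
  have h3 := telescope s f a b x hab' m
  rw [show Finset.Icc 1 m = insert 1 (Finset.Icc 2 m) from by
        ext k; simp only [Finset.mem_Icc, Finset.mem_insert]; omega,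
      Finset.sum_insert (by simp)] at h3
  simp only [List.replicate_one, Nat.sub_self, pow_zero, mul_one] at h3
  have hD21 := divDiff_step s f a a b [b] (by simp) hab'
  simp only [List.dropLast] at hD21
  have hD11 := divDiff_step s f a b b [] rfl hab'
  simp only [List.dropLast, divDiff_singleton] at hD11
  have hsum : (∑ k ∈ Finset.Icc 2 m,
      divDiff s f (a :: a :: List.replicate k b) * ((x - a) ^ 2 * (x - b) ^ (k - 1))) =
      (x - a) ^ 2 * (∑ k ∈ Finset.Icc 2 m,
        divDiff s f (a :: a :: List.replicate k b) * (x - b) ^ (k - 1)) := by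
    rw [Finset.mul_sum]; exact Finset.sum_congr rfl fun k _ => by ring
  rw [hsum]
  have hM : f x * (b - a) = (b - x) * f a + (x - a) * f b +
      divDiff s f [a, a, b] * ((x - a) * (x - b)) * (b - a) +
      (x - a) ^ 2 * (∑ k ∈ Finset.Icc 2 m,
        divDiff s f (a :: a :: List.replicate k b) * (x - b) ^ (k - 1)) * (b - a) +
      (x - a) ^ 2 * (x - b) ^ m * divDiff s f (a :: a :: x :: List.replicate m b) * (b - a) := by
    linear_combination (a - b) * h1 + (a - b) * (x - a) * h2 + (b - a) * (x - a) ^ 2 * h3 +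
      (b - a) * (x - a) * hD21 + (x - a) * hD11
  field_simp
  linear_combination hM

end DDaux

/-- Identity (2.4) of Lemma 2.1: the `(2, n-2)` Hermite expansion of the
Edmundson–Lah–Ribarič difference `LR(f,g,a,b,A)`. -/
theorem lemma21_m_eq_two {E : Type*} [Nonempty E]
    (a b : ℝ) (hab : a < b) (n : ℕ) (hn : 3 ≤ n)
    (f : ℝ → ℝ) (hf : ContDiffOn ℝ n f (Set.Icc a b))
    (A : (E → ℝ) →ₗ[ℝ] ℝ)
    (hApos : ∀ h : E → ℝ, (∀ t, 0 ≤ h t) → 0 ≤ A h)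
    (hA1 : A (fun _ => (1 : ℝ)) = 1)
    (g : E → ℝ) (hg : ∀ t, g t ∈ Set.Icc a b) :
    A (fun t => f (g t)) - (b - A g) / (b - a) * f a - (A g - a) / (b - a) * f b =
      divDiff (Set.Icc a b) f [a, a, b] * A (fun t => (g t - a) * (g t - b)) +
      (∑ k ∈ Finset.Icc 2 (n - 2),
        divDiff (Set.Icc a b) f (a :: a :: List.replicate k b) *
          A (fun t => (g t - a) ^ 2 * (g t - b) ^ (k - 1))) +
      A (fun t => (g t - a) ^ 2 * (g t - b) ^ (n - 2) *
          divDiff (Set.Icc a b) f (a :: a :: g t :: List.replicate (n - 2) b)) := by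
  classical
  set s : Set ℝ := Set.Icc a b
  have hm : 1 ≤ n - 2 := by omega
  have hmul : ∀ (c : ℝ) (h : E → ℝ), A (fun t => c * h t) = c * A h := by
    intro c h
    exact A.map_smul c h
  have hadd : ∀ (h1 h2 : E → ℝ), A (fun t => h1 t + h2 t) = A h1 + A h2 := by
    intro h1 h2; exact A.map_add h1 h2
  have key : ∀ t : E, f (g t) =
      (b - g t) / (b - a) * f a + (g t - a) / (b - a) * f b +
      divDiff s f [a, a, b] * ((g t - a) * (g t - b)) +
      (∑ k ∈ Finset.Icc 2 (n - 2),
        divDiff s f (a :: a :: List.replicate k b) * ((g t - a) ^ 2 * (g t - b) ^ (k - 1))) +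
      (g t - a) ^ 2 * (g t - b) ^ (n - 2) *
        divDiff s f (a :: a :: g t :: List.replicate (n - 2) b) := fun t =>
    DDaux.pointwise s f a b hab (n - 2) hm (g t)
  have e0 : (fun t => f (g t)) = fun t =>
      ((((b - g t) / (b - a) * f a + (g t - a) / (b - a) * f b) +
      divDiff s f [a, a, b] * ((g t - a) * (g t - b))) +
      (∑ k ∈ Finset.Icc 2 (n - 2),
        divDiff s f (a :: a :: List.replicate k b) * ((g t - a) ^ 2 * (g t - b) ^ (k - 1)))) +
      ((g t - a) ^ 2 * (g t - b) ^ (n - 2) *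
        divDiff s f (a :: a :: g t :: List.replicate (n - 2) b)) := by
    funext t; rw [key t]
  rw [e0, hadd, hadd, hadd]
  -- linear part
  have elin : A (fun t => (b - g t) / (b - a) * f a + (g t - a) / (b - a) * f b) =
      (b - A g) / (b - a) * f a + (A g - a) / (b - a) * f b := by
    rw [hadd]
    have e1 : (fun t => (b - g t) / (b - a) * f a) = fun t => f a / (b - a) * (b - g t) := by
      funext t; ring
    have e2 : (fun t => (g t - a) / (b - a) * f b) = fun t => f b / (b - a) * (g t - a) := by
      funext t; ring
    rw [e1, e2, hmul, hmul]
    have e3 : A (fun t => b - g t) = b - A g := by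
      have : (fun t => b - g t) = (b • (fun _ => (1 : ℝ)) - g : E → ℝ) := by
        funext t; simp
      rw [this, A.map_sub, A.map_smul, hA1, smul_eq_mul, mul_one]
    have e4 : A (fun t => g t - a) = A g - a := by
      have : (fun t => g t - a) = (g - a • (fun _ => (1 : ℝ)) : E → ℝ) := by
        funext t; simp
      rw [this, A.map_sub, A.map_smul, hA1, smul_eq_mul, mul_one]
    rw [e3, e4]; ring
  rw [elin, hmul]
  -- sum part
  have esum : A (fun t => ∑ k ∈ Finset.Icc 2 (n - 2),
      divDiff s f (a :: a :: List.replicate k b) * ((g t - a) ^ 2 * (g t - b) ^ (k - 1))) =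
      ∑ k ∈ Finset.Icc 2 (n - 2), divDiff s f (a :: a :: List.replicate k b) *
        A (fun t => (g t - a) ^ 2 * (g t - b) ^ (k - 1)) := by
    have e5 : (fun t => ∑ k ∈ Finset.Icc 2 (n - 2),
        divDiff s f (a :: a :: List.replicate k b) * ((g t - a) ^ 2 * (g t - b) ^ (k - 1))) =
        ∑ k ∈ Finset.Icc 2 (n - 2), (fun t =>
          divDiff s f (a :: a :: List.replicate k b) * ((g t - a) ^ 2 * (g t - b) ^ (k - 1))) := by
      funext t; rw [Finset.sum_apply]
    rw [e5, map_sum]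
    exact Finset.sum_congr rfl fun k _ => hmul _ _
  rw [esum]
  ring
end

section
/- Let A be a positive normalized linear functional on L, let f ∈ C^n([a,b]) with n ≥ 2, and let g ∈ L with f∘g ∈ L. Then LR(f,g,a,b,A) = Σ_{k=2}^{n-1} f[b; a,…,a (k times)] · A[(g−b1)(g−a1)^{k−1}] + A(R*_1(g)), where R*_1(t) = (t−b)(t−a)^{n−1} · f[t; b; a,…,a ((n−1) times)]. -/
variable (s : Set ℝ) (f : ℝ → ℝ)

lemma divDiff_single (x : ℝ) : divDiff s f [x] = f x := by simp [divDiff]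

lemma divDiff_cons (x y : ℝ) (l : List ℝ)
    (h : x ≠ (y :: l).getLast (List.cons_ne_nil y l)) :
    divDiff s f (x :: y :: l) =
      (divDiff s f (y :: l) - divDiff s f (x :: (y :: l).dropLast)) /
        ((y :: l).getLast (List.cons_ne_nil y l) - x) := by
  rw [divDiff, if_neg h]

lemma divDiff_pair (x y : ℝ) (h : x ≠ y) :
    divDiff s f [x, y] = (f y - f x) / (y - x) := by
  rw [divDiff_cons s f x y [] (by simpa using h)]
  simp [divDiff_single]


lemma divDiff_cons' (x : ℝ) (l : List ℝ) (hl : l ≠ []) (h : x ≠ l.getLast hl) :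
    divDiff s f (x :: l) =
      (divDiff s f l - divDiff s f (x :: l.dropLast)) / (l.getLast hl - x) := by
  cases l with
  | nil => exact absurd rfl hl
  | cons y l' => exact divDiff_cons s f x y l' h


lemma recD (a b : ℝ) (hab : a ≠ b) (k : ℕ) :
    divDiff s f (List.replicate (k+1) a ++ [b]) =
      (divDiff s f (List.replicate k a ++ [b]) - divDiff s f (List.replicate (k+1) a)) / (b - a) := by
  have hgl : (List.replicate k a ++ [b]).getLast (by simp) = b := List.getLast_concat
  have e : List.replicate (k+1) a ++ [b] = a :: (List.replicate k a ++ [b]) := by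
    simp [List.replicate_succ]
  rw [e, divDiff_cons' s f a _ (by simp) (by rw [hgl]; exact hab), hgl,
    List.dropLast_concat, ← List.replicate_succ]

lemma recR (a b x : ℝ) (hab : a ≠ b) (m : ℕ) :
    divDiff s f (List.replicate (m+1) a ++ [x, b]) =
      (divDiff s f (List.replicate m a ++ [x, b]) -
        divDiff s f (List.replicate (m+1) a ++ [x])) / (b - a) := by
  have hgl : (List.replicate m a ++ [x, b]).getLast (by simp) = b := by simp
  have e : List.replicate (m+1) a ++ [x, b] = a :: (List.replicate m a ++ [x, b]) := by
    simp [List.replicate_succ]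
  have hdl : (List.replicate m a ++ [x, b]).dropLast = List.replicate m a ++ [x] := by
    rw [List.dropLast_append_cons]; rfl
  rw [e, divDiff_cons' s f a _ (by simp) (by rw [hgl]; exact hab), hgl, hdl,
    ← List.cons_append, ← List.replicate_succ]


lemma claimB (a b : ℝ) (hab : a ≠ b) (x : ℝ) (hxa : x ≠ a) (m : ℕ) :
    (b - x) * divDiff s f (List.replicate m a ++ [x, b]) +
      divDiff s f (List.replicate m a ++ [x]) =
    divDiff s f (List.replicate m a ++ [b]) := by
  have h1 : b - a ≠ 0 := sub_ne_zero.mpr (Ne.symm hab)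
  have h2 : x - a ≠ 0 := sub_ne_zero.mpr hxa
  induction m with
  | zero =>
    simp only [List.replicate_zero, List.nil_append]
    by_cases hxb : x = b
    · subst hxb; simp [divDiff_single]
    · rw [divDiff_pair s f x b hxb, divDiff_single, divDiff_single]
      have : b - x ≠ 0 := sub_ne_zero.mpr (Ne.symm hxb)
      field_simp
      ring
  | succ m ih =>
    have e1 : (x - a) * divDiff s f (List.replicate (m+1) a ++ [x]) =
        divDiff s f (List.replicate m a ++ [x]) - divDiff s f (List.replicate (m+1) a) := by
      rw [recD s f a x (Ne.symm hxa) m]; field_simp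
    have e2 : (b - a) * divDiff s f (List.replicate (m+1) a ++ [x, b]) =
        divDiff s f (List.replicate m a ++ [x, b]) -
          divDiff s f (List.replicate (m+1) a ++ [x]) := by
      rw [recR s f a b x hab m]; field_simp
    have e3 : (b - a) * divDiff s f (List.replicate (m+1) a ++ [b]) =
        divDiff s f (List.replicate m a ++ [b]) - divDiff s f (List.replicate (m+1) a) := by
      rw [recD s f a b hab m]; field_simp
    have H : (b - a) * (x - a) * ((b - x) * divDiff s f (List.replicate (m+1) a ++ [x, b]) +
        divDiff s f (List.replicate (m+1) a ++ [x])) =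
        (b - a) * (x - a) * divDiff s f (List.replicate (m+1) a ++ [b]) := by
      linear_combination (x - a) * (b - x) * e2 + (x - a) * e1 - (x - a) * e3 + (x - a) * ih
    exact mul_left_cancel₀ (mul_ne_zero h1 h2) H

lemma claimC (a b : ℝ) (hab : a ≠ b) (x : ℝ) (hxa : x ≠ a) (m : ℕ) :
    divDiff s f (List.replicate m a ++ [x, b]) -
      (x - a) * divDiff s f (List.replicate (m+1) a ++ [x, b]) =
    divDiff s f (List.replicate (m+1) a ++ [b]) := by
  have h1 : b - a ≠ 0 := sub_ne_zero.mpr (Ne.symm hab)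
  have h2 : x - a ≠ 0 := sub_ne_zero.mpr hxa
  have e1 : (x - a) * divDiff s f (List.replicate (m+1) a ++ [x]) =
      divDiff s f (List.replicate m a ++ [x]) - divDiff s f (List.replicate (m+1) a) := by
    rw [recD s f a x (Ne.symm hxa) m]; field_simp
  have e2 : (b - a) * divDiff s f (List.replicate (m+1) a ++ [x, b]) =
      divDiff s f (List.replicate m a ++ [x, b]) -
        divDiff s f (List.replicate (m+1) a ++ [x]) := by
    rw [recR s f a b x hab m]; field_simp
  have e3 : (b - a) * divDiff s f (List.replicate (m+1) a ++ [b]) =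
      divDiff s f (List.replicate m a ++ [b]) - divDiff s f (List.replicate (m+1) a) := by
    rw [recD s f a b hab m]; field_simp
  have H : (b - a) * (divDiff s f (List.replicate m a ++ [x, b]) -
      (x - a) * divDiff s f (List.replicate (m+1) a ++ [x, b])) =
      (b - a) * divDiff s f (List.replicate (m+1) a ++ [b]) := by
    linear_combination (-(x - a)) * e2 - e3 + e1 + claimB s f a b hab x hxa m
  exact mul_left_cancel₀ h1 H

lemma keyIdentity (a b : ℝ) (hab : a ≠ b) (m : ℕ) (hm : 1 ≤ m) (x : ℝ) :
    f x - (b - x) / (b - a) * f a - (x - a) / (b - a) * f b =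
      (∑ k ∈ Finset.Icc 2 m,
        divDiff s f (List.replicate k a ++ [b]) * ((x - b) * (x - a) ^ (k - 1))) +
      (x - b) * (x - a) ^ m * divDiff s f (List.replicate m a ++ [x, b]) := by
  have h1 : b - a ≠ 0 := sub_ne_zero.mpr (Ne.symm hab)
  induction m, hm using Nat.le_induction with
  | base =>
    rw [show Finset.Icc 2 1 = ∅ by rfl, Finset.sum_empty, zero_add, pow_one,
      recR s f a b x hab 0]
    simp only [List.replicate_zero, List.nil_append, List.replicate_succ]
    by_cases hxa : x = a
    · subst hxa; field_simp; ring
    by_cases hxb : x = b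
    · subst hxb; field_simp; ring
    rw [divDiff_pair s f x b hxb]
    rw [show ([a] ++ [x] : List ℝ) = [a, x] from rfl,
      divDiff_pair s f a x (fun h => hxa h.symm)]
    have h2 : x - a ≠ 0 := sub_ne_zero.mpr hxa
    have h3 : b - x ≠ 0 := sub_ne_zero.mpr (Ne.symm hxb)
    field_simp
    ring
  | succ m hm ih =>
    rw [Finset.sum_Icc_succ_top (by omega : 2 ≤ m + 1), ih]
    simp only [Nat.add_sub_cancel]
    by_cases hxa : x = a
    · subst hxa
      have : (x - x) ^ m = 0 := by
        rw [sub_self]; exact zero_pow (by omega)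
      simp [sub_self, zero_pow (show m ≠ 0 by omega), zero_pow (show m + 1 ≠ 0 by omega)]
    · have hc := claimC s f a b hab x hxa m
      linear_combination ((x - b) * (x - a) ^ m) * hc

/-- Identity (2.8) of Lemma 2.2: the mirror `(1, n-1)` Hermite expansion of the
Edmundson–Lah–Ribarič difference `LR(f,g,a,b,A)`. -/
theorem lemma22_m_eq_one {E : Type*} [Nonempty E]
    (a b : ℝ) (hab : a < b) (n : ℕ) (hn : 2 ≤ n)
    (f : ℝ → ℝ) (hf : ContDiffOn ℝ n f (Set.Icc a b))
    (A : (E → ℝ) →ₗ[ℝ] ℝ)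
    (hApos : ∀ h : E → ℝ, (∀ t, 0 ≤ h t) → 0 ≤ A h)
    (hA1 : A (fun _ => (1 : ℝ)) = 1)
    (g : E → ℝ) (hg : ∀ t, g t ∈ Set.Icc a b) :
    A (fun t => f (g t)) - (b - A g) / (b - a) * f a - (A g - a) / (b - a) * f b =
      (∑ k ∈ Finset.Icc 2 (n - 1),
        divDiff (Set.Icc a b) f (List.replicate k a ++ [b]) *
          A (fun t => (g t - b) * (g t - a) ^ (k - 1))) +
      A (fun t => (g t - b) * (g t - a) ^ (n - 1) *
          divDiff (Set.Icc a b) f (List.replicate (n - 1) a ++ [g t, b])) := by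
  have hm : 1 ≤ n - 1 := by omega
  have habne : a ≠ b := ne_of_lt hab
  have key : (fun t => f (g t)) =
      ((f a / (b - a)) • (fun t => b - g t) + (f b / (b - a)) • (fun t => g t - a)) +
      ((∑ k ∈ Finset.Icc 2 (n - 1), divDiff (Set.Icc a b) f (List.replicate k a ++ [b]) •
          (fun t => (g t - b) * (g t - a) ^ (k - 1))) +
        (fun t => (g t - b) * (g t - a) ^ (n - 1) *
          divDiff (Set.Icc a b) f (List.replicate (n - 1) a ++ [g t, b]))) := by
    funext t
    have hk := keyIdentity (Set.Icc a b) f a b habne (n - 1) hm (g t)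
    simp only [Pi.add_apply, Pi.smul_apply, Finset.sum_apply, smul_eq_mul]
    linear_combination hk
  have hA2 : A (fun t => b - g t) = b - A g := by
    have e : (fun t => b - g t) = b • (fun _ => (1 : ℝ)) - g := by
      funext t; simp
    rw [e, map_sub, map_smul, hA1, smul_eq_mul, mul_one]
  have hA3 : A (fun t => g t - a) = A g - a := by
    have e : (fun t => g t - a) = g - a • (fun _ => (1 : ℝ)) := by
      funext t; simp
    rw [e, map_sub, map_smul, hA1, smul_eq_mul, mul_one]
  rw [key]
  rw [map_add, map_add, map_add, map_smul, map_smul, map_sum]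
  simp only [map_smul, smul_eq_mul, hA2, hA3]
  have h1 : b - a ≠ 0 := sub_ne_zero.mpr habne.symm
  field_simp
  ring
end
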